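/- Let n = 2m+1 be odd, v₁, …, v_n distinct points of the unit circle-like sphere S of a two-dimensional normed space arranged counterclockwise with v_{n+1} = v₁, such that the n sectors B_{v_i}^{v_{i+1}} partition the unit ball into n pieces of equal area (counting multiplicity k of winding). Then the 2n points {±v₁, …, ±v_n} are all distinct and split the unit ball B into 2n disjoint sectors of equal area. -/

import Mathlib

open Real Set

/-- `N` is a norm on the two-dimensional real vector space `ℝ × ℝ`. -/
def IsNorm (N : ℝ × ℝ → ℝ) : Prop :=
  (∀ x, N x = 0 ↔ x = 0) ∧ (∀ (a : ℝ) (x : ℝ × ℝ), N (a • x) = |a| * N x) ∧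
    ∀ x y, N (x + y) ≤ N x + N y

/-- The 2D cross product `u ∧ v`; `u ≺ v` means `0 < wedge u v`. -/
def wedge (u v : ℝ × ℝ) : ℝ := u.1 * v.2 - u.2 * v.1

/-- `inf_{t ∈ [0,1]} N ((1−t)u + tv)`, the minimal `N`-norm on the segment `[u,v]`. -/
noncomputable def segInf (N : ℝ × ℝ → ℝ) (u v : ℝ × ℝ) : ℝ :=
  sInf ((fun t : ℝ => N ((1 - t) • u + t • v)) '' Icc (0:ℝ) 1)

/-- Property (P-ρS): every chord of the unit sphere of `N` that supports `ρS`
touches `ρS` at its midpoint. -/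
def PropP (N : ℝ × ℝ → ℝ) (ρ : ℝ) : Prop :=
  ∀ u v : ℝ × ℝ, N u = 1 → N v = 1 → segInf N u v = ρ →
    N ((1/2 : ℝ) • u + (1/2 : ℝ) • v) = ρ

/-- The sector `B_u^v` of the unit ball bounded by `[0,u]`, `[0,v]` and the
counterclockwise arc of the sphere from `u` to `v` (arc less than a half turn). -/
def Sector (N : ℝ × ℝ → ℝ) (u v : ℝ × ℝ) : Set (ℝ × ℝ) :=
  {x | N x ≤ 1 ∧ 0 ≤ wedge u x ∧ 0 ≤ wedge x v}

namespace Stmt18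
open MeasureTheory

lemma wedge_swap (a b : ℝ × ℝ) : wedge a b = - wedge b a := by simp [wedge]; ring

lemma wedge_neg_left (a x : ℝ × ℝ) : wedge (-a) x = - wedge a x := by simp [wedge]; ring

lemma wedge_neg_right (a x : ℝ × ℝ) : wedge a (-x) = - wedge a x := by simp [wedge]; ring

lemma wedge_plucker (a b c x : ℝ × ℝ) :
    wedge x c * wedge a b = wedge a c * wedge x b + wedge a x * wedge b c := by
  simp [wedge]; ring

lemma wedge_zero_left (x : ℝ × ℝ) : wedge 0 x = 0 := by simp [wedge]

section NormFacts

variable {N : ℝ × ℝ → ℝ} (hN : IsNorm N)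
include hN

lemma N_zero : N 0 = 0 := (hN.1 0).2 rfl

lemma N_neg (x : ℝ × ℝ) : N (-x) = N x := by
  have := hN.2.1 (-1) x
  simpa using this

lemma N_nonneg (x : ℝ × ℝ) : 0 ≤ N x := by
  have h := hN.2.2 x (-x)
  rw [add_neg_cancel, N_zero hN, N_neg hN] at h
  linarith

lemma N_ne_zero {x : ℝ × ℝ} (hx : N x = 1) : x ≠ 0 := by
  intro h; rw [h, N_zero hN] at hx; norm_num at hx

lemma N_lip (x y : ℝ × ℝ) : N x ≤ N y + (N (1,0) + N (0,1)) * ‖x - y‖ := by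
  have h1 : N x ≤ N y + N (x - y) := by
    have := hN.2.2 y (x - y)
    simpa using this
  have hd : x - y = (x.1 - y.1) • ((1:ℝ),(0:ℝ)) + (x.2 - y.2) • ((0:ℝ),(1:ℝ)) := by
    ext <;> simp
  have h2 : N (x - y) ≤ |x.1 - y.1| * N (1,0) + |x.2 - y.2| * N (0,1) := by
    rw [hd]
    calc N _ ≤ N ((x.1 - y.1) • ((1:ℝ),(0:ℝ))) + N ((x.2 - y.2) • ((0:ℝ),(1:ℝ))) :=
          hN.2.2 _ _
      _ = |x.1 - y.1| * N (1,0) + |x.2 - y.2| * N (0,1) := by rw [hN.2.1, hN.2.1]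
  have hf : |x.1 - y.1| ≤ ‖x - y‖ := by
    have := norm_fst_le (x - y); simpa [Real.norm_eq_abs] using this
  have hs : |x.2 - y.2| ≤ ‖x - y‖ := by
    have := norm_snd_le (x - y); simpa [Real.norm_eq_abs] using this
  have h10 := N_nonneg hN (1,0)
  have h01 := N_nonneg hN (0,1)
  nlinarith

lemma N_continuous : Continuous N := by
  have hLnn : 0 ≤ N (1,0) + N (0,1) := add_nonneg (N_nonneg hN _) (N_nonneg hN _)
  have key : ∀ x y : ℝ × ℝ, dist (N x) (N y) ≤ (N (1,0) + N (0,1)) * dist x y := by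
    intro x y
    rw [Real.dist_eq, dist_eq_norm]
    rw [abs_le]
    constructor
    · have := N_lip hN y x
      rw [show y - x = -(x - y) by ring, norm_neg] at this
      linarith
    · have := N_lip hN x y
      linarith
  exact (LipschitzWith.of_dist_le_mul (K := ⟨N (1,0) + N (0,1), hLnn⟩) (by exact_mod_cast key)).continuous

lemma N_lower : ∃ c : ℝ, 0 < c ∧ ∀ x, c * ‖x‖ ≤ N x := by
  have hcomp : IsCompact (Metric.sphere (0:ℝ×ℝ) 1) := isCompact_sphere 0 1
  have hne : ((1:ℝ),(0:ℝ)) ∈ Metric.sphere (0:ℝ×ℝ) 1 := by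
    simp [Prod.norm_def]
  obtain ⟨x0, hx0mem, hx0min⟩ :=
    hcomp.exists_isMinOn ⟨_, hne⟩ ((N_continuous hN).continuousOn)
  have hx0 : ‖x0‖ = 1 := by simpa using hx0mem
  have hx0ne : x0 ≠ 0 := by intro h; rw [h] at hx0; simp at hx0
  have hc : 0 < N x0 := by
    rcases (N_nonneg hN x0).lt_or_eq with h | h
    · exact h
    · exact absurd ((hN.1 x0).1 h.symm) hx0ne
  refine ⟨N x0, hc, fun x => ?_⟩
  rcases eq_or_ne x 0 with rfl | hx
  · simp [N_zero hN]
  · have hnx : ‖x‖ ≠ 0 := norm_ne_zero_iff.2 hx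
    have hmem : (‖x‖⁻¹ • x) ∈ Metric.sphere (0:ℝ×ℝ) 1 := by
      simp [norm_smul, abs_of_nonneg (norm_nonneg x), inv_mul_cancel₀ hnx]
    have h1 : N x0 ≤ N (‖x‖⁻¹ • x) := hx0min hmem
    have h2 : N x = ‖x‖ * N (‖x‖⁻¹ • x) := by
      have := hN.2.1 ‖x‖ (‖x‖⁻¹ • x)
      rw [smul_smul, mul_inv_cancel₀ hnx, one_smul] at this
      rw [this, abs_of_nonneg (norm_nonneg x)]
    rw [h2]
    have := norm_nonneg x
    nlinarith

lemma ball_fin : volume {x : ℝ × ℝ | N x ≤ 1} ≠ ⊤ := by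
  obtain ⟨c, hc, hlow⟩ := N_lower hN
  have hsub : {x : ℝ × ℝ | N x ≤ 1} ⊆ Metric.closedBall 0 (1/c) := by
    intro x hx
    simp only [Metric.mem_closedBall, dist_zero_right]
    rw [le_div_iff₀ hc]
    have := hlow x
    simp only [mem_setOf_eq] at hx
    nlinarith
  exact ne_top_of_le_ne_top ((isCompact_closedBall _ _).measure_lt_top).ne
    (measure_mono hsub)

lemma ball_measurable : MeasurableSet {x : ℝ × ℝ | N x ≤ 1} :=
  measurableSet_le (N_continuous hN).measurable measurable_const

omit hN in
lemma wedge_continuous_right (a : ℝ × ℝ) : Continuous (fun x => wedge a x) := by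
  unfold wedge; fun_prop

omit hN in
lemma wedge_continuous_left (b : ℝ × ℝ) : Continuous (fun x => wedge x b) := by
  unfold wedge; fun_prop

lemma sector_measurable (a b : ℝ × ℝ) : MeasurableSet (Sector N a b) := by
  have h1 : Sector N a b = {x : ℝ × ℝ | N x ≤ 1} ∩
      ({x | 0 ≤ wedge a x} ∩ {x | 0 ≤ wedge x b}) := by
    ext x; simp [Sector, mem_setOf_eq, and_assoc]
  rw [h1]
  exact (ball_measurable hN).inter
    ((measurableSet_le measurable_const (wedge_continuous_right a).measurable).inter
     (measurableSet_le measurable_const (wedge_continuous_left b).measurable))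

end NormFacts

lemma line_null {b : ℝ × ℝ} (hb : b ≠ 0) : volume {x : ℝ × ℝ | wedge b x = 0} = 0 := by
  set f : (ℝ × ℝ) →ₗ[ℝ] ℝ :=
    { toFun := fun x => b.1 * x.2 - b.2 * x.1
      map_add' := by intro x y; simp; ring
      map_smul' := by intro c x; simp; ring }
  have hker : {x : ℝ × ℝ | wedge b x = 0} = (LinearMap.ker f : Set (ℝ × ℝ)) := by
    ext x; simp [wedge, f, LinearMap.mem_ker]
  rw [hker]
  refine Measure.addHaar_submodule volume _ ?_
  intro htop
  have hmem : ((-b.2, b.1) : ℝ × ℝ) ∈ LinearMap.ker f := htop ▸ Submodule.mem_top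
  simp only [LinearMap.mem_ker, f, LinearMap.coe_mk, AddHom.coe_mk] at hmem
  have hsum : b.1^2 + b.2^2 = 0 := by nlinarith [hmem]
  have h1 : b.1^2 = 0 ∧ b.2^2 = 0 :=
    (add_eq_zero_iff_of_nonneg (sq_nonneg _) (sq_nonneg _)).1 hsum
  exact hb (Prod.ext (pow_eq_zero_iff two_ne_zero |>.1 h1.1)
    (pow_eq_zero_iff two_ne_zero |>.1 h1.2))

lemma vol_union_line {s t : Set (ℝ × ℝ)} (ht : MeasurableSet t) {b : ℝ × ℝ} (hb : b ≠ 0)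
    (h : s ∩ t ⊆ {x | wedge b x = 0}) : volume (s ∪ t) = volume s + volume t := by
  have h0 : volume (s ∩ t) = 0 := measure_mono_null h (line_null hb)
  have := measure_union_add_inter s ht (μ := volume)
  rw [h0, add_zero] at this
  exact this

lemma vol_neg (s : Set (ℝ × ℝ)) : volume (Neg.neg ⁻¹' s) = volume s := by
  have heq : (Neg.neg ⁻¹' s) = (((-1:ℝ) • ·) : ℝ×ℝ → ℝ×ℝ) ⁻¹' s := by
    ext x; simp
  rw [heq, Measure.addHaar_preimage_smul volume (by norm_num : (-1:ℝ) ≠ 0) s]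
  simp

section VolumeFacts

variable {N : ℝ × ℝ → ℝ} (hN : IsNorm N)
include hN

lemma sector_subset (a b : ℝ × ℝ) : Sector N a b ⊆ {x : ℝ × ℝ | N x ≤ 1} :=
  fun _ hx => hx.1

lemma sector_fin (a b : ℝ × ℝ) : volume (Sector N a b) ≠ ⊤ :=
  ne_top_of_le_ne_top (ball_fin hN) (measure_mono (sector_subset hN a b))

lemma sector_neg (a b : ℝ × ℝ) : Sector N (-a) (-b) = Neg.neg ⁻¹' (Sector N a b) := by
  ext x
  simp only [Sector, mem_setOf_eq, mem_preimage, N_neg hN, wedge,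
    Prod.fst_neg, Prod.snd_neg]
  constructor <;> rintro ⟨h1, h2, h3⟩ <;> exact ⟨h1, by nlinarith, by nlinarith⟩

lemma vol_sector_neg (a b : ℝ × ℝ) :
    volume (Sector N (-a) (-b)) = volume (Sector N a b) := by
  rw [sector_neg hN, vol_neg]

lemma vol_sector_add {a b c : ℝ × ℝ} (hab : 0 < wedge a b) (hbc : 0 < wedge b c)
    (hac : 0 < wedge a c) :
    volume (Sector N a c) = volume (Sector N a b) + volume (Sector N b c) := by
  have hb0 : b ≠ 0 := by
    intro h; rw [h, wedge_zero_left] at hbc; exact lt_irrefl _ hbc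
  have hunion : Sector N a c = Sector N a b ∪ Sector N b c := by
    ext x
    constructor
    · rintro ⟨h1, h2, h3⟩
      rcases le_or_gt 0 (wedge x b) with h | h
      · exact Or.inl ⟨h1, h2, h⟩
      · refine Or.inr ⟨h1, ?_, h3⟩
        rw [wedge_swap] at h; linarith
    · rintro (⟨h1, h2, h3⟩ | ⟨h1, h2, h3⟩)
      · refine ⟨h1, h2, ?_⟩
        by_contra hxc
        push_neg at hxc
        have hcx : 0 < wedge c x := by rw [wedge_swap]; linarith
        have hp2 : wedge c x * wedge a b
            = -(wedge a c * wedge x b) - (wedge a x * wedge b c) := by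
          simp [wedge]; ring
        linarith [mul_pos hcx hab, mul_nonneg hac.le h3, mul_nonneg h2 hbc.le, hp2]
      · refine ⟨h1, ?_, h3⟩
        by_contra hax
        push_neg at hax
        have hxa : 0 < wedge x a := by rw [wedge_swap]; linarith
        have hp2 : wedge x a * wedge b c
            = -(wedge a b * wedge x c) - (wedge b x * wedge a c) := by
          simp [wedge]; ring
        linarith [mul_pos hxa hbc, mul_nonneg hab.le h3, mul_nonneg h2 hac.le, hp2]
  rw [hunion]
  apply vol_union_line (sector_measurable hN b c) hb0
  rintro x ⟨⟨_, _, h1⟩, ⟨h2, _⟩⟩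
  rw [wedge_swap] at h1
  simp only [mem_setOf_eq]
  linarith

lemma vol_sector_half {a b : ℝ × ℝ} (hab : 0 < wedge a b) :
    (volume (Sector N a b) + volume (Sector N b (-a))) +
      (volume (Sector N a b) + volume (Sector N b (-a))) =
      volume {x : ℝ × ℝ | N x ≤ 1} := by
  have ha0 : a ≠ 0 := by
    intro h; rw [h, wedge_zero_left] at hab; exact lt_irrefl _ hab
  set H : Set (ℝ × ℝ) := {x | N x ≤ 1 ∧ 0 ≤ wedge a x} with hHdef
  have hHmeas : MeasurableSet H :=
    (ball_measurable hN).inter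
      (measurableSet_le measurable_const (wedge_continuous_right a).measurable)
  have h1 : volume H = volume (Sector N a b) + volume (Sector N b (-a)) := by
    have hu : H = Sector N a b ∪ Sector N b (-a) := by
      ext x
      simp only [hHdef, Sector, mem_setOf_eq, mem_union]
      constructor
      · rintro ⟨h1, h2⟩
        rcases le_or_gt 0 (wedge x b) with h | h
        · exact Or.inl ⟨h1, h2, h⟩
        · refine Or.inr ⟨h1, ?_, ?_⟩
          · rw [wedge_swap] at h; linarith
          · rw [wedge_swap, wedge_neg_left]; linarith
      · rintro (⟨h1, h2, _⟩ | ⟨h1, _, h3⟩)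
        · exact ⟨h1, h2⟩
        · refine ⟨h1, ?_⟩
          rw [wedge_swap, wedge_neg_left] at h3; linarith
    rw [hu]
    have hb0 : b ≠ 0 := by
      intro h; rw [h] at hab
      rw [wedge_swap, wedge_zero_left] at hab; simp at hab
    apply vol_union_line (sector_measurable hN b (-a)) hb0
    rintro x ⟨⟨_, _, h1⟩, ⟨h2, _⟩⟩
    rw [wedge_swap] at h1
    simp only [mem_setOf_eq]
    linarith
  have h2 : volume H + volume H = volume {x : ℝ × ℝ | N x ≤ 1} := by
    have hneg : volume (Neg.neg ⁻¹' H) = volume H := vol_neg H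
    have hu : {x : ℝ × ℝ | N x ≤ 1} = H ∪ (Neg.neg ⁻¹' H) := by
      ext x
      simp only [hHdef, mem_setOf_eq, mem_union, mem_preimage]
      constructor
      · intro hx
        rcases le_or_gt 0 (wedge a x) with h | h
        · exact Or.inl ⟨hx, h⟩
        · refine Or.inr ⟨by rwa [N_neg hN], ?_⟩
          rw [wedge_neg_right]; linarith
      · rintro (⟨h, _⟩ | ⟨h, _⟩)
        · exact h
        · rwa [N_neg hN] at h
    rw [hu]
    rw [vol_union_line (hHmeas.preimage measurable_neg) ha0 ?_, hneg]
    rintro x ⟨⟨_, h1⟩, ⟨_, h2⟩⟩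
    rw [wedge_neg_right] at h2
    simp only [mem_setOf_eq]
    linarith
  rw [← h1, h2]

lemma N_lip' (hL : IsNorm N) : ∃ L : ℝ, 0 ≤ L ∧ ∀ x y : ℝ × ℝ, N x ≤ N y + L * ‖x - y‖ :=
  ⟨N (1,0) + N (0,1), add_nonneg (N_nonneg hN _) (N_nonneg hN _), N_lip hN⟩

lemma vol_sector_pos {a b : ℝ × ℝ} (ha : N a = 1) (hb : N b = 1)
    (hab : 0 < wedge a b) : 0 < volume (Sector N a b) := by
  obtain ⟨L, hL0, hLlip⟩ := N_lip' hN hN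
  set mpt : ℝ × ℝ := ((a.1 + b.1)/4, (a.2 + b.2)/4) with hmpt
  have hNm : N mpt ≤ 1/2 := by
    have hsm : mpt = (1/4 : ℝ) • (a + b) := by
      rw [Prod.ext_iff]
      constructor <;> simp [hmpt] <;> ring
    have h1 : N (a + b) ≤ 2 := by
      have := hN.2.2 a b; rw [ha, hb] at this; linarith
    have h2 := hN.2.1 (1/4) (a + b)
    rw [hsm, h2, abs_of_pos (by norm_num : (0:ℝ) < 1/4)]
    linarith
  obtain ⟨Ca, hCa0, hCa⟩ : ∃ C : ℝ, 0 < C ∧ |a.1| + |a.2| ≤ C :=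
    ⟨|a.1| + |a.2| + 1, by positivity, by linarith⟩
  obtain ⟨Cb, hCb0, hCb⟩ : ∃ C : ℝ, 0 < C ∧ |b.1| + |b.2| ≤ C :=
    ⟨|b.1| + |b.2| + 1, by positivity, by linarith⟩
  obtain ⟨r, hr0, hrle1, hrle2, hrle3⟩ :
      ∃ r : ℝ, 0 < r ∧ L * r ≤ 1/2 ∧ Ca * r ≤ wedge a b / 8 ∧ Cb * r ≤ wedge a b / 8 := by
    refine ⟨min (1/(2*(L+1))) (min (wedge a b / (8*Ca)) (wedge a b / (8*Cb))),
      lt_min (by positivity) (lt_min (by positivity) (by positivity)), ?_, ?_, ?_⟩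
    · have h1 : min (1/(2*(L+1))) (min (wedge a b / (8*Ca)) (wedge a b / (8*Cb)))
          ≤ 1/(2*(L+1)) := min_le_left _ _
      have h2 : L * min (1/(2*(L+1))) (min (wedge a b / (8*Ca)) (wedge a b / (8*Cb)))
          ≤ L * (1/(2*(L+1))) := by nlinarith
      have h3 : L * (1/(2*(L+1))) ≤ 1/2 := by
        rw [mul_one_div, div_le_div_iff₀ (by linarith) (by norm_num)]
        linarith
      linarith
    · have h1 : min (1/(2*(L+1))) (min (wedge a b / (8*Ca)) (wedge a b / (8*Cb)))
          ≤ wedge a b / (8*Ca) := le_trans (min_le_right _ _) (min_le_left _ _)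
      have h2 : Ca * (wedge a b / (8*Ca)) = wedge a b / 8 := by field_simp
      nlinarith
    · have h1 : min (1/(2*(L+1))) (min (wedge a b / (8*Ca)) (wedge a b / (8*Cb)))
          ≤ wedge a b / (8*Cb) := le_trans (min_le_right _ _) (min_le_right _ _)
      have h2 : Cb * (wedge a b / (8*Cb)) = wedge a b / 8 := by field_simp
      nlinarith
  have hsub : Metric.ball mpt r ⊆ Sector N a b := by
    intro x hx
    rw [Metric.mem_ball, dist_eq_norm] at hx
    have hxm1 : |(x - mpt).1| ≤ ‖x - mpt‖ := by
      have := norm_fst_le (x - mpt); simpa [Real.norm_eq_abs] using this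
    have hxm2 : |(x - mpt).2| ≤ ‖x - mpt‖ := by
      have := norm_snd_le (x - mpt); simpa [Real.norm_eq_abs] using this
    have hnn : 0 ≤ ‖x - mpt‖ := norm_nonneg _
    refine ⟨?_, ?_, ?_⟩
    · have hlip := hLlip x mpt
      have h1 : L * ‖x - mpt‖ ≤ L * r := by nlinarith
      linarith
    · have hsplit : wedge a x = (1/4) * wedge a b + wedge a (x - mpt) := by
        simp only [hmpt, wedge, Prod.fst_sub, Prod.snd_sub]; ring
      have hb1 : |wedge a (x - mpt)| ≤ Ca * ‖x - mpt‖ := by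
        have h0 : |wedge a (x - mpt)| ≤ |a.1| * |(x-mpt).2| + |a.2| * |(x-mpt).1| := by
          rw [wedge]
          calc |a.1 * (x-mpt).2 - a.2 * (x-mpt).1|
              ≤ |a.1 * (x-mpt).2| + |a.2 * (x-mpt).1| := abs_sub _ _
            _ = |a.1| * |(x-mpt).2| + |a.2| * |(x-mpt).1| := by rw [abs_mul, abs_mul]
        have ha1 : (0:ℝ) ≤ |a.1| := abs_nonneg _
        have ha2 : (0:ℝ) ≤ |a.2| := abs_nonneg _
        nlinarith
      have h2 : Ca * ‖x - mpt‖ ≤ Ca * r := by nlinarith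
      have habs := abs_le.1 hb1
      rw [hsplit]
      linarith
    · have hsplit : wedge x b = (1/4) * wedge a b + wedge (x - mpt) b := by
        simp only [hmpt, wedge, Prod.fst_sub, Prod.snd_sub]; ring
      have hb1 : |wedge (x - mpt) b| ≤ Cb * ‖x - mpt‖ := by
        have h0 : |wedge (x - mpt) b| ≤ |b.2| * |(x-mpt).1| + |b.1| * |(x-mpt).2| := by
          rw [wedge]
          calc |(x-mpt).1 * b.2 - (x-mpt).2 * b.1|
              ≤ |(x-mpt).1 * b.2| + |(x-mpt).2 * b.1| := abs_sub _ _
            _ = |b.2| * |(x-mpt).1| + |b.1| * |(x-mpt).2| := by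
                rw [abs_mul, abs_mul]; ring
        have hb1' : (0:ℝ) ≤ |b.1| := abs_nonneg _
        have hb2' : (0:ℝ) ≤ |b.2| := abs_nonneg _
        nlinarith
      have h2 : Cb * ‖x - mpt‖ ≤ Cb * r := by nlinarith
      have habs := abs_le.1 hb1
      rw [hsplit]
      linarith
  calc (0:ENNReal) < volume (Metric.ball mpt r) := Metric.measure_ball_pos volume mpt hr0
    _ ≤ volume (Sector N a b) := measure_mono hsub

end VolumeFacts

lemma wedge_neg_left' (a b : ℝ × ℝ) : wedge (-a) b = wedge b a := by simp [wedge]; ring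

lemma wedge_neg_right' (a b : ℝ × ℝ) : wedge b (-a) = wedge a b := by simp [wedge]; ring

noncomputable def dA (N : ℝ × ℝ → ℝ) (a b : ℝ × ℝ) : ℝ := (volume (Sector N a b)).toReal

noncomputable def VB (N : ℝ × ℝ → ℝ) : ℝ := (volume {x : ℝ × ℝ | N x ≤ 1}).toReal

noncomputable def tau (N : ℝ × ℝ → ℝ) (u x : ℝ × ℝ) : ℝ :=
  if 0 < wedge u x then dA N u x
  else if 0 < wedge x u then VB N / 2 + dA N (-u) x
  else if x = u then 0 else VB N / 2

section RealFacts

variable {N : ℝ × ℝ → ℝ} (hN : IsNorm N)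
include hN

omit hN in
lemma dA_nonneg (a b : ℝ × ℝ) : 0 ≤ dA N a b := ENNReal.toReal_nonneg

lemma dA_le_VB (a b : ℝ × ℝ) : dA N a b ≤ VB N :=
  ENNReal.toReal_mono (ball_fin hN) (measure_mono (sector_subset hN a b))

lemma dA_neg (a b : ℝ × ℝ) : dA N (-a) (-b) = dA N a b := by
  unfold dA; rw [vol_sector_neg hN]

lemma dA_add {a b c : ℝ × ℝ} (hab : 0 < wedge a b) (hbc : 0 < wedge b c)
    (hac : 0 < wedge a c) : dA N a c = dA N a b + dA N b c := by
  unfold dA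
  rw [vol_sector_add hN hab hbc hac,
    ENNReal.toReal_add (sector_fin hN a b) (sector_fin hN b c)]

lemma dA_half {a b : ℝ × ℝ} (hab : 0 < wedge a b) :
    dA N a b + dA N b (-a) = VB N / 2 := by
  have h := congrArg ENNReal.toReal (vol_sector_half hN hab)
  rw [ENNReal.toReal_add
      (ENNReal.add_ne_top.2 ⟨sector_fin hN a b, sector_fin hN b (-a)⟩)
      (ENNReal.add_ne_top.2 ⟨sector_fin hN a b, sector_fin hN b (-a)⟩),
    ENNReal.toReal_add (sector_fin hN a b) (sector_fin hN b (-a))] at h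
  unfold dA VB
  linarith [h]

lemma dA_pos {a b : ℝ × ℝ} (ha : N a = 1) (hb : N b = 1) (hab : 0 < wedge a b) :
    0 < dA N a b :=
  ENNReal.toReal_pos (vol_sector_pos hN ha hb hab).ne' (sector_fin hN a b)

lemma dA_lt_half {a b : ℝ × ℝ} (ha : N a = 1) (hb : N b = 1) (hab : 0 < wedge a b) :
    dA N a b < VB N / 2 := by
  have h := dA_half hN hab
  have hba : 0 < wedge b (-a) := by rw [wedge_neg_right']; exact hab
  have := dA_pos hN hb (by rw [N_neg hN]; exact ha) hba
  linarith

lemma VB_pos {a b : ℝ × ℝ} (ha : N a = 1) (hb : N b = 1) (hab : 0 < wedge a b) :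
    0 < VB N := lt_of_lt_of_le (dA_pos hN ha hb hab) (dA_le_VB hN a b)

lemma colinear {a x : ℝ × ℝ} (ha : N a = 1) (hx : N x = 1) (h : wedge a x = 0) :
    x = a ∨ x = -a := by
  have ha0 : a ≠ 0 := N_ne_zero hN ha
  obtain ⟨c, hc⟩ : ∃ c : ℝ, x = c • a := by
    by_cases h1 : a.1 = 0
    · have h2 : a.2 ≠ 0 := by
        intro h2; exact ha0 (Prod.ext h1 h2)
      have hx1 : x.1 = 0 := by
        rw [wedge, h1] at h
        simp only [zero_mul, zero_sub, neg_eq_zero] at h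
        exact (mul_eq_zero.1 h).resolve_left h2
      refine ⟨x.2 / a.2, ?_⟩
      rw [Prod.ext_iff]
      constructor
      · simp [hx1, h1]
      · rw [Prod.smul_snd, smul_eq_mul, div_mul_cancel₀ _ h2]
    · refine ⟨x.1 / a.1, ?_⟩
      rw [Prod.ext_iff]
      constructor
      · rw [Prod.smul_fst, smul_eq_mul, div_mul_cancel₀ _ h1]
      · rw [wedge] at h
        rw [Prod.smul_snd, smul_eq_mul, div_mul_eq_mul_div, eq_div_iff h1]
        linear_combination h
  have habs : |c| = 1 := by
    have := hN.2.1 c a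
    rw [← hc, hx, ha, mul_one] at this
    exact this.symm
  rcases abs_eq (by norm_num : (0:ℝ) ≤ 1) |>.1 habs with h1 | h1
  · left; rw [hc, h1, one_smul]
  · right; rw [hc, h1, neg_one_smul]

lemma pos_cases {u x : ℝ × ℝ} (hu : N u = 1) (hx : N x = 1) :
    x = u ∨ x = -u ∨ 0 < wedge u x ∨ 0 < wedge x u := by
  rcases lt_trichotomy 0 (wedge u x) with h | h | h
  · exact Or.inr (Or.inr (Or.inl h))
  · rcases colinear hN hu hx h.symm with h1 | h1
    · exact Or.inl h1
    · exact Or.inr (Or.inl h1)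
  · refine Or.inr (Or.inr (Or.inr ?_))
    rw [wedge_swap] at h
    linarith

omit hN in
lemma tau_up {u x : ℝ × ℝ} (h : 0 < wedge u x) : tau N u x = dA N u x := if_pos h

omit hN in
lemma tau_down {u x : ℝ × ℝ} (h : 0 < wedge x u) :
    tau N u x = VB N / 2 + dA N (-u) x := by
  have h1 : ¬ 0 < wedge u x := by rw [wedge_swap]; linarith
  simp only [tau, if_neg h1, if_pos h]

omit hN in
lemma tau_self (u : ℝ × ℝ) : tau N u u = 0 := by
  have h0 : wedge u u = 0 := by rw [wedge]; ring
  simp [tau, h0]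

omit hN in
lemma tau_negu {u : ℝ × ℝ} (hu0 : u ≠ 0) : tau N u (-u) = VB N / 2 := by
  have h0 : wedge u (-u) = 0 := by rw [wedge]; simp; ring
  have h1 : wedge (-u) u = 0 := by rw [wedge]; simp; ring
  have h2 : ¬ ((-u : ℝ × ℝ) = u) := by
    intro h
    apply hu0
    have h3 : u + u = 0 := by
      nth_rewrite 1 [← h]; simp
    have h4 : (2:ℝ) • u = 0 := by rw [two_smul]; exact h3
    simpa using (smul_eq_zero.1 h4).resolve_left (by norm_num)
  simp [tau, h0, h1, h2]

lemma tau_add {u x y : ℝ × ℝ} (hu : N u = 1) (hx : N x = 1) (hy : N y = 1)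
    (hxy : 0 < wedge x y) :
    tau N u y = tau N u x + dA N x y ∨
      tau N u y = tau N u x + dA N x y - VB N := by
  have hu0 : u ≠ 0 := N_ne_zero hN hu
  rcases pos_cases hN hu hx with hxeq | hxeq | hux | hxu
  · -- x = u
    rw [hxeq] at hxy ⊢
    left; rw [tau_self, tau_up hxy, zero_add]
  · -- x = -u
    rw [hxeq] at hxy ⊢
    have hyu : 0 < wedge y u := by rwa [wedge_neg_left'] at hxy
    left; rw [tau_negu hu0, tau_down hyu]
  · -- up x
    rcases pos_cases hN hu hy with hyeq | hyeq | huy | hyu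
    · exfalso
      rw [hyeq, wedge_swap] at hxy
      linarith
    · rw [hyeq] at hxy ⊢
      left
      rw [tau_negu hu0, tau_up hux]
      linarith [dA_half hN hux]
    · left
      rw [tau_up hux, tau_up huy, dA_add hN hux hxy huy]
    · left
      have h1 : 0 < wedge x (-u) := by rw [wedge_neg_right']; exact hux
      have h2 : 0 < wedge (-u) y := by rw [wedge_neg_left']; exact hyu
      have h3 := dA_add hN h1 h2 hxy
      have h4 := dA_half hN hux
      rw [tau_up hux, tau_down hyu]
      linarith
  · -- down x
    rcases pos_cases hN hu hy with hyeq | hyeq | huy | hyu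
    · rw [hyeq] at hxy ⊢
      right
      have h1 : 0 < wedge (-u) x := by rw [wedge_neg_left']; exact hxu
      have h2 := dA_half hN h1
      rw [neg_neg] at h2
      rw [tau_self, tau_down hxu]
      linarith
    · exfalso
      rw [hyeq, wedge_neg_right'] at hxy
      rw [wedge_swap] at hxu
      linarith
    · right
      have h1 := dA_add hN hxu huy hxy
      have h2 : 0 < wedge (-u) x := by rw [wedge_neg_left']; exact hxu
      have h3 := dA_half hN h2
      rw [neg_neg] at h3
      rw [tau_up huy, tau_down hxu]
      linarith
    · left
      have h1 : 0 < wedge (-u) x := by rw [wedge_neg_left']; exact hxu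
      have h2 : 0 < wedge (-u) y := by rw [wedge_neg_left']; exact hyu
      have h3 := dA_add hN h1 hxy h2
      rw [tau_down hxu, tau_down hyu]
      linarith

lemma tau_neg_pt {u x : ℝ × ℝ} (hu : N u = 1) (hx : N x = 1) :
    tau N u (-x) = tau N u x + VB N / 2 ∨
      tau N u (-x) = tau N u x - VB N / 2 := by
  have hu0 : u ≠ 0 := N_ne_zero hN hu
  rcases pos_cases hN hu hx with rfl | rfl | hux | hxu
  · left; rw [tau_self, tau_negu hu0, zero_add]
  · right; rw [neg_neg, tau_self, tau_negu hu0]; ring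
  · left
    have h1 : 0 < wedge (-x) u := by rw [wedge_neg_left']; exact hux
    rw [tau_up hux, tau_down h1, dA_neg hN]
    ring
  · right
    have h1 : 0 < wedge u (-x) := by rw [wedge_neg_right']; exact hxu
    have h2 : dA N u (-x) = dA N (-u) x := by
      rw [← dA_neg hN (-u) x, neg_neg]
    rw [tau_up h1, tau_down hxu, h2]
    ring

end RealFacts

-- AddCircle helpers

lemma coe_eq_coe_iff {p : ℝ} (s t : ℝ) :
    ((s : ℝ) : AddCircle p) = ((t : ℝ) : AddCircle p) ↔ ∃ z : ℤ, s - t = z * p := by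
  rw [← sub_eq_zero, ← AddCircle.coe_sub, AddCircle.coe_eq_zero_iff]
  constructor
  · rintro ⟨z, hz⟩
    exact ⟨z, by rw [← hz, zsmul_eq_mul]⟩
  · rintro ⟨z, hz⟩
    exact ⟨z, by rw [zsmul_eq_mul, ← hz]⟩

lemma no_wrap {p r : ℝ} (hp : 0 < p) (h1 : 0 < r) (h2 : r < p) :
    ¬ ∃ z : ℤ, r = z * p := by
  rintro ⟨z, rfl⟩
  rcases le_or_gt z 0 with h | h
  · have : (z:ℝ) ≤ 0 := by exact_mod_cast h
    nlinarith
  · have : (1:ℝ) ≤ z := by exact_mod_cast h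
    nlinarith

lemma small_zero {p s : ℝ} (hp : 0 < p) (h1 : -p < s) (h2 : s < p)
    (hz : ∃ z : ℤ, s = z * p) : s = 0 := by
  obtain ⟨z, rfl⟩ := hz
  rcases lt_trichotomy z 0 with h | rfl | h
  · exfalso
    have hz1 : z ≤ -1 := by omega
    have : (z:ℝ) ≤ -1 := by exact_mod_cast hz1
    nlinarith
  · simp
  · exfalso
    have : (1:ℝ) ≤ z := by exact_mod_cast h
    nlinarith

section CircFacts

variable {N : ℝ × ℝ → ℝ} (hN : IsNorm N) {p : ℝ} (hp : VB N = p)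
include hN hp

lemma tau_add_circ {u x y : ℝ × ℝ} (hu : N u = 1) (hx : N x = 1) (hy : N y = 1)
    (hxy : 0 < wedge x y) :
    ((tau N u y : ℝ) : AddCircle p) =
      ((tau N u x : ℝ) : AddCircle p) + ((dA N x y : ℝ) : AddCircle p) := by
  rcases tau_add hN hu hx hy hxy with h | h
  · rw [h, AddCircle.coe_add]
  · rw [hp] at h
    have h2 : ((tau N u x + dA N x y - p : ℝ) : AddCircle p)
        = ((tau N u x + dA N x y : ℝ) : AddCircle p) :=
      (coe_eq_coe_iff _ _).2 ⟨-1, by push_cast; ring⟩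
    rw [h, h2, AddCircle.coe_add]

lemma tau_neg_circ {u x : ℝ × ℝ} (hu : N u = 1) (hx : N x = 1) :
    ((tau N u (-x) : ℝ) : AddCircle p) =
      ((tau N u x : ℝ) : AddCircle p) + ((p / 2 : ℝ) : AddCircle p) := by
  rcases tau_neg_pt hN hu hx with h | h
  · rw [hp] at h
    rw [h, AddCircle.coe_add]
  · rw [hp] at h
    have h2 : ((tau N u x - p / 2 : ℝ) : AddCircle p)
        = ((tau N u x + p / 2 : ℝ) : AddCircle p) :=
      (coe_eq_coe_iff _ _).2 ⟨-1, by push_cast; ring⟩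
    rw [h, h2, AddCircle.coe_add]

lemma tau_between {u x y : ℝ × ℝ} (hu : N u = 1) (hx : N x = 1) (hy : N y = 1)
    (hVp : 0 < p) {r : ℝ} (hr1 : 0 < r) (hr2 : r < p / 2)
    (hc : ((tau N u y : ℝ) : AddCircle p) =
      ((tau N u x : ℝ) : AddCircle p) + ((r : ℝ) : AddCircle p)) :
    0 < wedge x y ∧ dA N x y = r := by
  rcases lt_trichotomy 0 (wedge x y) with hpos | hzero | hneg
  · refine ⟨hpos, ?_⟩
    have h1 := tau_add_circ hN hp hu hx hy hpos
    rw [hc] at h1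
    have h2 : ((r : ℝ) : AddCircle p) = ((dA N x y : ℝ) : AddCircle p) :=
      add_left_cancel h1
    have h3 := (coe_eq_coe_iff r (dA N x y)).1 h2
    have hd1 := dA_pos hN hx hy hpos
    have hd2 := dA_lt_half hN hx hy hpos
    rw [hp] at hd2
    have h4 : r - dA N x y = 0 :=
      small_zero hVp (by linarith) (by linarith) h3
    linarith
  · exfalso
    rcases colinear hN hx hy hzero.symm with hyeq | hyeq
    · rw [hyeq] at hc
      have h2 : ((r : ℝ) : AddCircle p) = (((0:ℝ)) : AddCircle p) := by
        have h1 : ((tau N u x : ℝ) : AddCircle p) + ((r : ℝ) : AddCircle p) =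
            ((tau N u x : ℝ) : AddCircle p) + (((0:ℝ)) : AddCircle p) := by
          rw [← hc]; simp
        exact add_left_cancel h1
      have h3 := (coe_eq_coe_iff r 0).1 h2
      refine no_wrap hVp hr1 (by linarith) ?_
      obtain ⟨z, hz⟩ := h3
      exact ⟨z, by linarith⟩
    · rw [hyeq] at hc
      have h1 := tau_neg_circ hN hp hu hx
      rw [hc] at h1
      have h2 : ((r : ℝ) : AddCircle p) = ((p / 2 : ℝ) : AddCircle p) :=
        add_left_cancel h1
      have h3 := (coe_eq_coe_iff r (p / 2)).1 h2
      have h4 : r - p / 2 = 0 :=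
        small_zero hVp (by linarith) (by linarith) h3
      linarith
  · exfalso
    have hyx : 0 < wedge y x := by rw [wedge_swap]; linarith
    have h1 := tau_add_circ hN hp hu hy hx hyx
    rw [hc] at h1
    have h2 : ((tau N u x : ℝ) : AddCircle p) + (((0:ℝ)) : AddCircle p) =
        ((tau N u x : ℝ) : AddCircle p) +
          (((r + dA N y x : ℝ)) : AddCircle p) := by
      rw [AddCircle.coe_add]
      rw [add_assoc] at h1
      simpa using h1
    have h3 : (((0:ℝ)) : AddCircle p) = ((r + dA N y x : ℝ) : AddCircle p) :=
      add_left_cancel h2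
    have h4 := (coe_eq_coe_iff (r + dA N y x) 0).1 h3.symm
    have hd1 := dA_pos hN hy hx hyx
    have hd2 := dA_lt_half hN hy hx hyx
    rw [hp] at hd2
    refine no_wrap (r := r + dA N y x) hVp (by linarith) (by linarith) ?_
    obtain ⟨z, hz⟩ := h4
    exact ⟨z, by linarith⟩

end CircFacts

lemma exists_idx {k n : ℕ} (hcop : Nat.Coprime k n) (hn1 : 1 < n) (hodd : n % 2 = 1)
    (j : ℕ) : ∃ i e : ℕ, e ≤ 1 ∧ (2*k*i + n*e) % (2*n) = j % (2*n) := by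
  obtain ⟨z, -, hz⟩ := Nat.exists_mul_mod_eq_one_of_coprime hcop hn1
  have hkz : k * z ≡ 1 [MOD n] := by
    show k * z % n = 1 % n
    rw [hz, Nat.mod_eq_of_lt hn1]
  by_cases hj : j % 2 = 0
  · refine ⟨z * (j/2), 0, Nat.zero_le 1, ?_⟩
    have h2 : 2 * ((k*z) * (j/2)) ≡ 2 * (1 * (j/2)) [MOD 2*n] :=
      Nat.ModEq.mul_left' 2 (hkz.mul_right (j/2))
    have h3 : 2 * ((k*z) * (j/2)) = 2*k*(z*(j/2)) + n*0 := by ring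
    have h4 : 2 * (1 * (j/2)) = j := by omega
    rw [h3, h4] at h2
    exact h2
  · have hj1 : j % 2 = 1 := by omega
    refine ⟨z * ((j+n)/2), 1, le_refl 1, ?_⟩
    have h2 : 2 * ((k*z) * ((j+n)/2)) ≡ 2 * (1 * ((j+n)/2)) [MOD 2*n] :=
      Nat.ModEq.mul_left' 2 (hkz.mul_right ((j+n)/2))
    have h4 : 2 * (1 * ((j+n)/2)) = j + n := by omega
    rw [h4] at h2
    have h5 := h2.add_right n
    have h6 : 2*((k*z)*((j+n)/2)) + n = 2*k*(z*((j+n)/2)) + n*1 := by ring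
    rw [h6] at h5
    have h7 : (j + n + n) % (2*n) = j % (2*n) := by
      have he : j + n + n = j + 1*(2*n) := by ring
      rw [he, Nat.add_mul_mod_self_right]
    exact Eq.trans h5 h7

lemma nsmul_mod {A : Type*} [AddCommGroup A] {g : A} {M : ℕ} (hg : M • g = 0)
    {s t : ℕ} (h : s % M = t % M) : s • g = t • g := by
  have key : ∀ s : ℕ, s • g = (s % M) • g := by
    intro s
    conv_lhs => rw [← Nat.div_add_mod s M]
    rw [add_nsmul]
    have h1 : (M * (s / M)) • g = (s / M) • (M • g) := by
      rw [mul_comm, mul_nsmul]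
      exact smul_comm _ _ _
    rw [h1, hg, smul_zero, zero_add]
  rw [key s, key t, h]

end Stmt18

open Stmt18 MeasureTheory in
/-- Let `n = 2m+1` be odd and `v₁,…,v_n` distinct points of the unit
sphere, arranged counterclockwise (cyclically, `v_{n+1} = v₁`), no `vᵢ` equal to
`−vⱼ`, such that each sector `B_{vᵢ}^{vᵢ₊₁}` has area `k·Area(B)/n` (winding number
`k` coprime to `n`). Then the `2n` points `{±v₁,…,±v_n}` split the unit ball into
`2n` sectors of equal area `Area(B)/(2n)`: any two cyclically consecutive points of
`{±vᵢ}` bound a sector of that area. -/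
theorem stmt_18 (N : ℝ × ℝ → ℝ) (hN : IsNorm N) (m n k : ℕ) (hm : 1 ≤ m)
    (hn : n = 2 * m + 1) (hk : 0 < k) (h2k : 2 * k < n) (hcop : Nat.Coprime k n)
    (v : ℕ → ℝ × ℝ) (hperiodic : ∀ i, v (i + n) = v i) (hS : ∀ i, N (v i) = 1)
    (hdist : ∀ i < n, ∀ j < n, v i = v j → i = j)
    (hccw : ∀ i, 0 < wedge (v i) (v (i + 1)))
    (hanti : ∀ i j, v i ≠ -(v j))
    (harea : ∀ i, MeasureTheory.volume (Sector N (v i) (v (i + 1)))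
      = (k : ENNReal) / (n : ENNReal) * MeasureTheory.volume {x : ℝ × ℝ | N x ≤ 1}) :
    ∀ a b : ℝ × ℝ,
      (∃ i, a = v i ∨ a = -(v i)) → (∃ j, b = v j ∨ b = -(v j)) →
      0 < wedge a b →
      (∀ c : ℝ × ℝ, (∃ l, c = v l ∨ c = -(v l)) → c ≠ a → c ≠ b →
        ¬(0 < wedge a c ∧ 0 < wedge c b)) →
      MeasureTheory.volume (Sector N a b)
        = MeasureTheory.volume {x : ℝ × ℝ | N x ≤ 1} / (2 * (n : ENNReal)) := by
  intro a b ha' hb' hab hno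
  obtain ⟨ia, ha⟩ := ha'
  obtain ⟨ib, hb⟩ := hb'
  have hn1 : 1 < n := by omega
  have hn0 : 0 < n := by omega
  have hnodd : n % 2 = 1 := by omega
  have hn3 : 3 ≤ n := by omega
  have hnR : (0:ℝ) < (n:ℝ) := by exact_mod_cast hn0
  have hu : N (v 0) = 1 := hS 0
  have hVfin : volume {x : ℝ × ℝ | N x ≤ 1} ≠ ⊤ := Stmt18.ball_fin hN
  have hV : 0 < VB N := Stmt18.VB_pos hN (hS 0) (hS 1) (hccw 0)
  obtain ⟨p, hp⟩ : ∃ p, VB N = p := ⟨_, rfl⟩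
  have hVp : 0 < p := hp ▸ hV
  set g0 : ℝ := p / (2*(n:ℝ)) with hg0
  have hg0pos : 0 < g0 := by rw [hg0]; positivity
  have hg0lt : g0 < p/2 := by
    rw [hg0, div_lt_div_iff₀ (by positivity) (by norm_num)]
    have hn3' : (3:ℝ) ≤ (n:ℝ) := by exact_mod_cast hn3
    nlinarith
  have hcoe_mul : ∀ (mm : ℕ) (r : ℝ),
      (((mm : ℝ) * r : ℝ) : AddCircle p) = mm • ((r : ℝ) : AddCircle p) := by
    intro mm r
    rw [← nsmul_eq_mul]
    exact AddCircle.coe_nsmul p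
  have hgA0 : (2*n) • ((g0 : ℝ) : AddCircle p) = 0 := by
    have h1 : ((((2*n : ℕ) : ℝ) * g0 : ℝ) : AddCircle p) = ((0:ℝ) : AddCircle p) := by
      refine (coe_eq_coe_iff _ _).2 ⟨1, ?_⟩
      rw [hg0]
      push_cast
      field_simp
      ring
    rw [← hcoe_mul (2*n) g0] at *
    rw [h1]
    simp
  have hdstep : ∀ i, dA N (v i) (v (i+1)) = ((2*k : ℕ) : ℝ) * g0 := by
    intro i
    have h := harea i
    have h2 : dA N (v i) (v (i+1))
        = ((k : ENNReal) / (n : ENNReal) * volume {x : ℝ × ℝ | N x ≤ 1}).toReal :=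
      congrArg ENNReal.toReal h
    rw [ENNReal.toReal_mul, ENNReal.toReal_div, ENNReal.toReal_natCast,
      ENNReal.toReal_natCast] at h2
    have h3 : dA N (v i) (v (i+1)) = (k:ℝ)/(n:ℝ) * VB N := h2
    rw [h3, hp, hg0]
    push_cast
    field_simp
  have htauv : ∀ i, ((tau N (v 0) (v i) : ℝ) : AddCircle p)
      = ((tau N (v 0) (v 0) : ℝ) : AddCircle p) + (2*k*i) • ((g0 : ℝ) : AddCircle p) := by
    intro i
    induction i with
    | zero => simp
    | succ i ih =>
      have h1 := tau_add_circ hN hp hu (hS i) (hS (i+1)) (hccw i)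
      rw [ih, hdstep i, hcoe_mul (2*k) g0] at h1
      rw [h1, add_assoc, ← add_nsmul]
      have he2 : 2*k*i + 2*k = 2*k*(i+1) := by ring
      rw [he2]
  have htaunegv : ∀ i, ((tau N (v 0) (-(v i)) : ℝ) : AddCircle p)
      = ((tau N (v 0) (v 0) : ℝ) : AddCircle p)
        + (2*k*i + n) • ((g0 : ℝ) : AddCircle p) := by
    intro i
    have h1 := tau_neg_circ hN hp hu (hS i)
    rw [htauv i] at h1
    have h2 : ((p/2 : ℝ) : AddCircle p) = n • ((g0 : ℝ) : AddCircle p) := by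
      have h3 : (p/2 : ℝ) = ((n:ℕ):ℝ) * g0 := by
        rw [hg0]; field_simp
      rw [h3, hcoe_mul]
    rw [h1, h2, add_assoc, ← add_nsmul]
  have hmem_tau : ∀ x : ℝ × ℝ, (∃ l, x = v l ∨ x = -(v l)) →
      ∃ j : ℕ, N x = 1 ∧ ((tau N (v 0) x : ℝ) : AddCircle p)
        = ((tau N (v 0) (v 0) : ℝ) : AddCircle p) + j • ((g0 : ℝ) : AddCircle p) := by
    rintro x ⟨l, rfl | rfl⟩
    · exact ⟨2*k*l, hS l, htauv l⟩
    · exact ⟨2*k*l + n, by rw [N_neg hN]; exact hS l, htaunegv l⟩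
  obtain ⟨ja, hNa, hja⟩ := hmem_tau a ⟨ia, ha⟩
  obtain ⟨jb, hNb, hjb⟩ := hmem_tau b ⟨ib, hb⟩
  have hdab_pos : 0 < dA N a b := dA_pos hN hNa hNb hab
  have hdab_lt : dA N a b < p/2 := by
    have h := dA_lt_half hN hNa hNb hab
    rwa [hp] at h
  have hABcirc : ((tau N (v 0) b : ℝ) : AddCircle p)
      = ((tau N (v 0) a : ℝ) : AddCircle p) + ((dA N a b : ℝ) : AddCircle p) :=
    tau_add_circ hN hp hu hNa hNb hab
  rcases lt_trichotomy (dA N a b) g0 with hlt | heq | hgt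
  · exfalso
    have h1 : ((tau N (v 0) (v 0) : ℝ) : AddCircle p) + jb • ((g0 : ℝ) : AddCircle p)
        = ((tau N (v 0) (v 0) : ℝ) : AddCircle p)
          + (ja • ((g0 : ℝ) : AddCircle p) + ((dA N a b : ℝ) : AddCircle p)) := by
      rw [← add_assoc, ← hja, ← hjb]
      exact hABcirc
    have h2 : jb • ((g0 : ℝ) : AddCircle p)
        = ja • ((g0 : ℝ) : AddCircle p) + ((dA N a b : ℝ) : AddCircle p) :=
      add_left_cancel h1
    have h3 : ((dA N a b : ℝ) : AddCircle p)
        = jb • ((g0 : ℝ) : AddCircle p) - ja • ((g0 : ℝ) : AddCircle p) := by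
      rw [h2]; abel
    have h4 : (((jb:ℤ) - (ja:ℤ)) • ((g0 : ℝ) : AddCircle p))
        = jb • ((g0 : ℝ) : AddCircle p) - ja • ((g0 : ℝ) : AddCircle p) := by
      rw [sub_zsmul, natCast_zsmul, natCast_zsmul, sub_eq_add_neg]
    have h5 : ((dA N a b : ℝ) : AddCircle p)
        = (((((jb:ℤ) - (ja:ℤ)) • g0 : ℝ)) : AddCircle p) := by
      rw [h3, ← h4]
      exact (AddCircle.coe_zsmul p).symm
    obtain ⟨w, hw⟩ := (coe_eq_coe_iff _ _).1 h5
    rw [zsmul_eq_mul] at hw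
    have hpg : p = (2*(n:ℝ))*g0 := by rw [hg0]; field_simp
    have hM : dA N a b = ((((jb:ℤ) - ja) + w*(2*n) : ℤ) : ℝ) * g0 := by
      push_cast
      rw [hpg] at hw
      push_cast at hw
      linear_combination hw
    obtain ⟨M, hMdef⟩ : ∃ M : ℤ, M = ((jb:ℤ) - ja) + w*(2*n) := ⟨_, rfl⟩
    rw [← hMdef] at hM
    rcases le_or_gt (M:ℝ) 0 with hM0 | hM0
    · nlinarith only [hM, hdab_pos, hg0pos, hM0]
    · have hMZ : 0 < M := by exact_mod_cast hM0
      have hM1 : 1 ≤ M := hMZ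
      have hM1' : (1:ℝ) ≤ (M:ℝ) := by exact_mod_cast hM1
      nlinarith only [hM, hlt, hg0pos, hM1']
  · -- conclusion
    have hsfin : volume (Sector N a b) ≠ ⊤ := sector_fin hN a b
    have htor : (volume (Sector N a b)).toReal = g0 := heq
    have hvol : volume (Sector N a b) = ENNReal.ofReal g0 := by
      rw [← htor, ENNReal.ofReal_toReal hsfin]
    have hvB : volume {x : ℝ × ℝ | N x ≤ 1} = ENNReal.ofReal p := by
      rw [← hp, ← ENNReal.ofReal_toReal hVfin]
      rfl
    rw [hvol, hvB, hg0, ENNReal.ofReal_div_of_pos (by positivity)]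
    congr 1
    have h1 : (2*(n:ℝ)) = ((2*n : ℕ) : ℝ) := by push_cast; ring
    rw [h1, ENNReal.ofReal_natCast]
    push_cast
    ring
  · exfalso
    obtain ⟨i, e, he, hmod⟩ := exists_idx hcop hn1 hnodd (ja + 1)
    set c : ℝ × ℝ := if e = 0 then v i else -(v i) with hc
    have hcmem : ∃ l, c = v l ∨ c = -(v l) := by
      refine ⟨i, ?_⟩
      by_cases h : e = 0 <;> simp [hc, h]
    have hNc : N c = 1 := by
      by_cases h : e = 0
      · simp only [hc, if_pos h]; exact hS i
      · simp only [hc, if_neg h]; rw [N_neg hN]; exact hS i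
    have hτc : ((tau N (v 0) c : ℝ) : AddCircle p)
        = ((tau N (v 0) (v 0) : ℝ) : AddCircle p)
          + (2*k*i + n*e) • ((g0 : ℝ) : AddCircle p) := by
      by_cases h : e = 0
      · simp only [hc, if_pos h, h, Nat.mul_zero, Nat.add_zero]
        exact htauv i
      · have h1 : e = 1 := by omega
        simp only [hc, if_neg h, h1, Nat.mul_one]
        exact htaunegv i
    have hτc2 : ((tau N (v 0) c : ℝ) : AddCircle p)
        = ((tau N (v 0) a : ℝ) : AddCircle p) + ((g0 : ℝ) : AddCircle p) := by
      rw [hτc, nsmul_mod hgA0 hmod, hja, add_nsmul, one_nsmul, add_assoc]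
    obtain ⟨hwac, hdac⟩ := tau_between hN hp hu hNa hNc hVp hg0pos hg0lt hτc2
    have hτb2 : ((tau N (v 0) b : ℝ) : AddCircle p)
        = ((tau N (v 0) c : ℝ) : AddCircle p)
          + ((dA N a b - g0 : ℝ) : AddCircle p) := by
      rw [hABcirc, hτc2, AddCircle.coe_sub]
      abel
    obtain ⟨hwcb, _⟩ := tau_between hN hp hu hNc hNb hVp (by linarith) (by linarith) hτb2
    have hca : c ≠ a := by
      intro hcaeq
      rw [hcaeq] at hτc2
      have h1 : ((tau N (v 0) a : ℝ) : AddCircle p) + ((g0 : ℝ) : AddCircle p)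
          = ((tau N (v 0) a : ℝ) : AddCircle p) + ((0 : ℝ) : AddCircle p) := by
        rw [← hτc2]; simp
      have h2 := (coe_eq_coe_iff g0 0).1 (add_left_cancel h1)
      refine no_wrap hVp hg0pos (by linarith) ?_
      obtain ⟨z, hz⟩ := h2
      exact ⟨z, by linarith⟩
    have hcb : c ≠ b := by
      intro hcbeq
      rw [hcbeq] at hτb2
      have h1 : ((tau N (v 0) b : ℝ) : AddCircle p) + ((dA N a b - g0 : ℝ) : AddCircle p)
          = ((tau N (v 0) b : ℝ) : AddCircle p) + ((0 : ℝ) : AddCircle p) := by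
        rw [← hτb2]; simp
      have h2 := (coe_eq_coe_iff (dA N a b - g0) 0).1 (add_left_cancel h1)
      refine no_wrap (r := dA N a b - g0) hVp (by linarith) (by linarith) ?_
      obtain ⟨z, hz⟩ := h2
      exact ⟨z, by linarith⟩
    exact hno c hcmem hca hcb ⟨hwac, hwcb⟩
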